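/- arXiv:1212.6004 — 5 statements merged into one kernel-verified Lean document; each statement's English description precedes it below -/
import Mathlib

section
/- Let k be a field, let A and B be associative unital k-algebras, let M be a simple A-module such that every A-linear endomorphism of M is multiplication by a scalar from k, and let N be a simple B-module. Then the tensor product M ⊗[k] N, with the A ⊗[k] B-module structure determined by (a ⊗ b) · (m ⊗ n) = (a · m) ⊗ (b · n), is a simple A ⊗[k] B-module. -/
open scoped TensorProduct
set_option maxHeartbeats 1000000

section density
variable {k A M : Type*} [Field k] [Ring A] [Algebra k A]
  [AddCommGroup M] [Module k M] [Module A M] [IsScalarTower k A M]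

lemma jacobson_density_aux (hM : IsSimpleModule A M)
    (hschur : ∀ f : M →ₗ[A] M, ∃ c : k, ∀ m : M, f m = c • m)
    {ι : Type*} (m : ι → M) (y : ι → M) (s : Finset ι)
    (hind : LinearIndependent k (fun i : s => m i)) :
    ∃ a : A, ∀ i ∈ s, a • m i = y i := by
  classical
  haveI := hM
  revert hind
  induction s using Finset.induction_on with
  | empty => exact fun _ => ⟨0, fun i hi => absurd hi (Finset.notMem_empty i)⟩
  | insert j s hj IH =>
    intro hind
    have hs : LinearIndependent k (fun i : s => m i) :=
      hind.comp (fun (i : {x // x ∈ s}) => (⟨i.1, Finset.mem_insert_of_mem i.2⟩ : {x // x ∈ insert j s}))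
        (fun x y h => by have := congrArg Subtype.val h; exact Subtype.ext this)
    obtain ⟨a₀, ha₀⟩ := IH hs
    let T : Submodule A M :=
      { carrier := {z | ∃ a : A, (∀ i ∈ s, a • m i = 0) ∧ a • m j = z}
        add_mem' := by
          rintro x y ⟨a, ha, rfl⟩ ⟨b, hb, rfl⟩
          exact ⟨a + b, fun i hi => by rw [add_smul, ha i hi, hb i hi, add_zero],
            add_smul a b (m j)⟩
        zero_mem' := ⟨0, fun i _ => zero_smul _ _, zero_smul _ _⟩
        smul_mem' := by
          rintro c x ⟨a, ha, rfl⟩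
          exact ⟨c * a, fun i hi => by rw [mul_smul, ha i hi, smul_zero], mul_smul c a (m j)⟩ }
    rcases eq_bot_or_eq_top T with hT | hT
    · exfalso
      -- density contradiction: every a killing s kills m j
      have hkill : ∀ a : A, (∀ i ∈ s, a • m i = 0) → a • m j = 0 := by
        intro a ha
        have : a • m j ∈ T := ⟨a, ha, rfl⟩
        rwa [hT, Submodule.mem_bot] at this
      -- build the extension
      haveI : IsSemisimpleModule A M := inferInstance
      haveI hss : IsSemisimpleModule A (∀ _ : s, M) := by
        refine isSemisimpleModule_of_isSemisimpleModule_submodule'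
          (p := fun i : s => LinearMap.range (LinearMap.single A (fun _ : s => M) i))
          (fun i => ?_) (LinearMap.iSup_range_single A _)
        exact IsSemisimpleModule.congr
          (LinearEquiv.ofInjective (LinearMap.single A (fun _ : s => M) i)
            (fun x y hxy => by simpa using congrFun hxy i)).symm
      let g : A →ₗ[A] (∀ _ : s, M) := LinearMap.pi (fun i : s => LinearMap.toSpanSingleton A M (m i))
      let h : A →ₗ[A] M := LinearMap.toSpanSingleton A M (m j)
      have hker : LinearMap.ker g ≤ LinearMap.ker h := by
        intro a ha
        have h1 : ∀ i ∈ s, a • m i = 0 := by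
          intro i hi
          have := congrFun (LinearMap.mem_ker.mp ha) ⟨i, hi⟩
          simpa [g, LinearMap.pi_apply, LinearMap.toSpanSingleton_apply] using this
        simpa [h, LinearMap.mem_ker, LinearMap.toSpanSingleton_apply] using hkill a h1
      obtain ⟨C, hC⟩ := exists_isCompl (LinearMap.range g)
      let ψ₀ : LinearMap.range g →ₗ[A] M :=
        ((LinearMap.ker g).liftQ h hker).comp (g.quotKerEquivRange.symm : _ →ₗ[A] _)
      let ψ : (∀ _ : s, M) →ₗ[A] M :=
        ψ₀.comp (Submodule.linearProjOfIsCompl _ C hC)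
      have hψ : ∀ a : A, ψ (g a) = a • m j := by
        intro a
        have h1 : Submodule.linearProjOfIsCompl _ C hC (g a) =
            ⟨g a, LinearMap.mem_range_self g a⟩ :=
          Submodule.linearProjOfIsCompl_apply_left hC ⟨g a, LinearMap.mem_range_self g a⟩
        have h2 : g.quotKerEquivRange.symm ⟨g a, LinearMap.mem_range_self g a⟩ =
            (LinearMap.ker g).mkQ a := g.quotKerEquivRange_symm_apply_image a _
        simp only [ψ, ψ₀, LinearMap.comp_apply, h1, LinearEquiv.coe_coe, h2]
        simp [h, LinearMap.toSpanSingleton_apply, Submodule.mkQ_apply]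
      choose c hc using fun i : s => hschur (ψ.comp (LinearMap.single A (fun _ : s => M) i))
      -- m j ∈ span k (m '' s)
      have e1 : m j = ψ (fun i : s => m i) := by
        have := hψ 1
        rw [one_smul] at this
        rw [← this]
        congr 1
        funext i
        simp [g, LinearMap.pi_apply, LinearMap.toSpanSingleton_apply, one_smul]
      have e2 : (fun i : s => m i.1) = ∑ i : s, Pi.single i (m i.1) :=
        (Finset.univ_sum_single _).symm
      have hmem : m j ∈ Submodule.span k (m '' ↑s) := by
        rw [e1, e2, map_sum]
        refine Submodule.sum_mem _ (fun i _ => ?_)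
        have : ψ (Pi.single i (m i.1)) = c i • m i.1 := by
          have := hc i (m i.1)
          simpa [LinearMap.comp_apply] using this
        rw [this]
        exact Submodule.smul_mem _ _ (Submodule.subset_span ⟨i.1, i.2, rfl⟩)
      -- contradiction with linear independence
      have hj' : (⟨j, Finset.mem_insert_self j s⟩ : (insert j s : Finset ι)) ∉
          {i : (insert j s : Finset ι) | i.1 ∈ s} := hj
      have hnot := LinearIndependent.notMem_span_image hind hj'
      apply hnot
      have himg : (fun i : (insert j s : Finset ι) => m i.1) ''
          {i : (insert j s : Finset ι) | i.1 ∈ s} = m '' ↑s := by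
        ext z
        constructor
        · rintro ⟨i, hi, rfl⟩; exact ⟨i.1, hi, rfl⟩
        · rintro ⟨x, hx, rfl⟩; exact ⟨⟨x, Finset.mem_insert_of_mem hx⟩, hx, rfl⟩
      rw [himg]
      exact hmem
    · have hmem : y j - a₀ • m j ∈ T := by rw [hT]; trivial
      obtain ⟨a', ha's, ha'j⟩ := hmem
      refine ⟨a₀ + a', fun i hi => ?_⟩
      rcases Finset.mem_insert.mp hi with rfl | hi'
      · rw [add_smul, ha'j]; abel
      · rw [add_smul, ha₀ i hi', ha's i hi', add_zero]

end density

section repr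
variable {k M N : Type*} [Field k] [AddCommGroup M] [Module k M]
  [AddCommGroup N] [Module k N] [DecidableEq ↥(Module.Basis.ofVectorSpaceIndex k M)]

noncomputable def tensorEquivAux (k M N : Type*) [Field k] [AddCommGroup M] [Module k M]
    [AddCommGroup N] [Module k N] [DecidableEq ↥(Module.Basis.ofVectorSpaceIndex k M)] :
    M ⊗[k] N ≃ₗ[k] (Module.Basis.ofVectorSpaceIndex k M →₀ N) :=
  (TensorProduct.congr (Module.Basis.ofVectorSpace k M).repr (LinearEquiv.refl k N)).trans
    (TensorProduct.finsuppScalarLeft k N _)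

lemma tensorEquivAux_symm_single (i : Module.Basis.ofVectorSpaceIndex k M) (n : N) :
    (tensorEquivAux k M N).symm (Finsupp.single i n) = (Module.Basis.ofVectorSpace k M i) ⊗ₜ[k] n := by
  rw [tensorEquivAux, LinearEquiv.trans_symm, LinearEquiv.trans_apply,
    TensorProduct.finsuppScalarLeft_symm_apply_single, TensorProduct.congr_symm_tmul]
  simp [Module.Basis.repr_symm_single_one]

lemma tensor_repr_aux (t : M ⊗[k] N) (ht : t ≠ 0) :
    ∃ (s : Finset (Module.Basis.ofVectorSpaceIndex k M)) (n : Module.Basis.ofVectorSpaceIndex k M → N),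
      s.Nonempty ∧ (∀ i ∈ s, n i ≠ 0) ∧
      t = ∑ i ∈ s, (Module.Basis.ofVectorSpace k M i) ⊗ₜ[k] n i := by
  set E := tensorEquivAux k M N
  set f := E t with hf
  have hf0 : f ≠ 0 := by
    intro h
    apply ht
    have := congrArg E.symm (h ▸ hf)
    simpa using this.symm
  refine ⟨f.support, f, Finsupp.support_nonempty_iff.mpr hf0, fun i hi => Finsupp.mem_support_iff.mp hi, ?_⟩
  have : t = E.symm f := by simp [hf]
  rw [this]
  conv_lhs => rw [← Finsupp.sum_single f]
  rw [Finsupp.sum, map_sum]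
  exact Finset.sum_congr rfl fun i _ => tensorEquivAux_symm_single i (f i)

lemma tmul_ne_zero_aux {m : M} {n : N} (hm : m ≠ 0) (hn : n ≠ 0) : m ⊗ₜ[k] n ≠ 0 := by
  intro h
  set b := Module.Basis.ofVectorSpace k M
  have hr : b.repr m ≠ 0 := fun h0 => hm (by simpa using congrArg b.repr.symm h0)
  obtain ⟨i, hi⟩ := Finsupp.ne_iff.mp hr
  have h2 : tensorEquivAux k M N (m ⊗ₜ[k] n) i = (b.repr m i) • n := by
    rw [tensorEquivAux, LinearEquiv.trans_apply, TensorProduct.congr_tmul]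
    simp [TensorProduct.finsuppScalarLeft_apply_tmul_apply]
    rfl
  rw [h, map_zero] at h2
  have : (b.repr m i) • n ≠ 0 := smul_ne_zero (by simpa using hi) hn
  exact this (by simpa using h2.symm)

end repr

/-- Let `k` be a field, `A` and `B` associative unital `k`-algebras,
`M` a simple `A`-module such that every `A`-linear endomorphism of `M` is multiplication
by a scalar from `k`, and `N` a simple `B`-module.  Then `M ⊗[k] N`, with the
`A ⊗[k] B`-module structure determined by `(a ⊗ b) • (m ⊗ n) = (a • m) ⊗ (b • n)`,
is a simple `A ⊗[k] B`-module. -/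
theorem simple_tensor_of_schur_simple
    (k A B M N : Type*) [Field k]
    [Ring A] [Algebra k A] [Ring B] [Algebra k B]
    [AddCommGroup M] [Module k M] [Module A M] [IsScalarTower k A M]
    [AddCommGroup N] [Module k N] [Module B N] [IsScalarTower k B N]
    [Module (A ⊗[k] B) (M ⊗[k] N)]
    (hsmul : ∀ (a : A) (b : B) (m : M) (n : N),
      (a ⊗ₜ[k] b) • (m ⊗ₜ[k] n) = (a • m) ⊗ₜ[k] (b • n))
    (hM : IsSimpleModule A M)
    (hschur : ∀ f : M →ₗ[A] M, ∃ c : k, ∀ m : M, f m = c • m)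
    (hN : IsSimpleModule B N) :
    IsSimpleModule (A ⊗[k] B) (M ⊗[k] N) := by
  classical
  haveI := hM
  haveI := hN
  haveI : Nontrivial M := IsSimpleModule.nontrivial A M
  haveI : Nontrivial N := IsSimpleModule.nontrivial B N
  obtain ⟨m0, hm0⟩ := exists_ne (0 : M)
  obtain ⟨n0, hn0⟩ := exists_ne (0 : N)
  haveI : Nontrivial (M ⊗[k] N) := ⟨m0 ⊗ₜ[k] n0, 0, tmul_ne_zero_aux hm0 hn0⟩
  set b := Module.Basis.ofVectorSpace k M with hb
  refine IsSimpleModule.mk (toIsSimpleOrder := ⟨?_⟩)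
  intro P
  rcases eq_or_ne P ⊥ with h | h
  · exact Or.inl h
  right
  -- P contains a nonzero element, hence a nonzero pure tensor
  obtain ⟨t, htP, ht0⟩ := (Submodule.ne_bot_iff P).mp h
  obtain ⟨s, n, ⟨i0, hi0⟩, hnz, ht⟩ := tensor_repr_aux t ht0
  have hind : LinearIndependent k (fun i : s => b i) :=
    b.linearIndependent.comp _ Subtype.val_injective
  obtain ⟨a, ha⟩ := jacobson_density_aux hM hschur (fun i => b i)
    (fun i => if i = i0 then b i0 else 0) s hind
  have hpure : (b i0) ⊗ₜ[k] (n i0) ∈ P := by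
    have h1 : (a ⊗ₜ[k] (1 : B)) • t ∈ P := P.smul_mem _ htP
    have h2 : (a ⊗ₜ[k] (1 : B)) • t = (b i0) ⊗ₜ[k] (n i0) := by
      rw [ht, Finset.smul_sum]
      have step : ∀ i ∈ s, (a ⊗ₜ[k] (1 : B)) • ((Module.Basis.ofVectorSpace k M) i ⊗ₜ[k] n i)
          = (if i = i0 then b i0 else 0) ⊗ₜ[k] n i := fun i hi => by
        rw [hsmul, ha i hi, one_smul]
      rw [Finset.sum_congr rfl step,
        Finset.sum_eq_single_of_mem i0 hi0 (fun i hi hne => by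
          rw [if_neg hne, TensorProduct.zero_tmul]),
        if_pos rfl]
    rwa [h2] at h1
  -- now generate everything from the pure tensor
  rw [eq_top_iff]
  rintro t' -
  induction t' using TensorProduct.induction_on with
  | zero => exact P.zero_mem
  | tmul m' n' =>
    obtain ⟨a', ha'⟩ := IsSimpleModule.toSpanSingleton_surjective A (b.ne_zero i0) m'
    obtain ⟨b', hb'⟩ := IsSimpleModule.toSpanSingleton_surjective B (hnz i0 hi0) n'
    have hmem := P.smul_mem (a' ⊗ₜ[k] b') hpure
    rwa [hsmul, show a' • b i0 = m' from ha', show b' • n i0 = n' from hb'] at hmem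
  | add x y hx hy => exact P.add_mem hx hy
end

section
/- Let A and B be associative unital ℂ-algebras, let M be a simple A-module whose dimension over ℂ is countable, and let N be a simple B-module whose dimension over ℂ is countable. Then the tensor product M ⊗[ℂ] N, with the A ⊗[ℂ] B-module structure determined by (a ⊗ b) · (m ⊗ n) = (a · m) ⊗ (b · n), is a simple A ⊗[ℂ] B-module. -/
open scoped TensorProduct


/-- In a division ring, elements of the subfield closure of a pairwise-commuting
set pairwise commute. -/
lemma Subfield.closure_comm {D : Type*} [DivisionRing D] {s : Set D}
    (hs : ∀ x ∈ s, ∀ y ∈ s, Commute x y) :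
    ∀ x ∈ Subfield.closure s, ∀ y ∈ Subfield.closure s, Commute x y := by
  have key : ∀ y ∈ s, ∀ x ∈ Subfield.closure s, Commute x y := by
    intro y hy x hx
    induction hx using Subfield.closure_induction with
    | mem z hz => exact hs z hz y hy
    | one => exact Commute.one_left y
    | add a b ha hb iha ihb => exact iha.add_left ihb
    | neg a ha ih => exact ih.neg_left
    | inv a ha ih => exact ih.inv_left₀
    | mul a b ha hb iha ihb => exact iha.mul_left ihb
  intro x hx y hy
  induction hy using Subfield.closure_induction with
  | mem z hz => exact key z hz x hx
  | one => exact Commute.one_right x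
  | add a b ha hb iha ihb => exact iha.add_right ihb
  | neg a ha ih => exact ih.neg_right
  | inv a ha ih => exact ih.inv_right₀
  | mul a b ha hb iha ihb => exact iha.mul_right ihb

/-- **Dixmier's lemma**: a division `ℂ`-algebra of dimension `< 𝔠` equals `ℂ`. -/
lemma dixmier_surjective {D : Type*} [DivisionRing D] [Algebra ℂ D]
    (hdim : Module.rank ℂ D < Cardinal.continuum) :
    Function.Surjective (algebraMap ℂ D) := by
  have halg : ∀ d : D, IsAlgebraic ℂ d := by
    intro d
    by_contra htr
    replace htr : Transcendental ℂ d := htr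
    set s : Set D := Set.range (algebraMap ℂ D) ∪ {d} with hs_def
    have hcomm : ∀ x ∈ s, ∀ y ∈ s, Commute x y := by
      intro x hx y hy
      rcases hx with ⟨c, rfl⟩ | rfl <;> rcases hy with ⟨c', rfl⟩ | rfl
      · exact Commute.map (Commute.all c c') (algebraMap ℂ D)
      · exact Algebra.commutes c _
      · exact (Algebra.commutes c' _).symm
      · exact Commute.refl _
    set E := Subfield.closure s with hE
    letI : Field E :=
      { (inferInstance : DivisionRing E) with
        mul_comm := fun a b =>
          Subtype.ext (Subfield.closure_comm hcomm a.1 a.2 b.1 b.2) }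
    have hmem : ∀ c : ℂ, algebraMap ℂ D c ∈ E :=
      fun c => Subfield.subset_closure (Or.inl ⟨c, rfl⟩)
    let f : ℂ →+* E := (algebraMap ℂ D).codRestrict E.toSubring hmem
    letI : Algebra ℂ E := f.toAlgebra
    have hdmem : d ∈ E := Subfield.subset_closure (Or.inr rfl)
    set x : E := ⟨d, hdmem⟩ with hx
    have hxtr : Transcendental ℂ x := by
      rw [transcendental_iff] at htr ⊢
      intro p hp
      apply htr p
      have : (E.subtype) (Polynomial.aeval x p) = Polynomial.aeval d p := by
        simp only [Polynomial.aeval_def]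
        rw [Polynomial.hom_eval₂]
        rfl
      rw [hp, map_zero] at this
      exact this.symm
    have li := hxtr.linearIndependent_sub_inv
    let j : E →ₗ[ℂ] D :=
      { toFun := fun e => (e : D)
        map_add' := fun _ _ => rfl
        map_smul' := fun c e => by
          change ((f c * e : E) : D) = c • (e : D)
          rw [Algebra.smul_def]; rfl }
    have hj : LinearMap.ker j = ⊥ := by
      rw [LinearMap.ker_eq_bot]
      exact fun a b h => Subtype.ext h
    have li2 := (li.map' j hj).cardinal_lift_le_rank
    rw [Cardinal.mk_complex, Cardinal.lift_continuum] at li2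
    exact absurd (li2.trans_lt (Cardinal.lift_lt.mpr hdim))
      (by rw [Cardinal.lift_continuum]; exact lt_irrefl _)
  haveI : Algebra.IsIntegral ℂ D := ⟨fun d => (halg d).isIntegral⟩
  exact IsAlgClosed.algebraMap_bijective_of_isIntegral.2

/-- **Schur–Dixmier**: every `A`-endomorphism of a simple `A`-module of countable
`ℂ`-dimension is a scalar. -/
lemma end_eq_smul {A M : Type*} [Ring A] [Algebra ℂ A]
    [AddCommGroup M] [Module ℂ M] [Module A M] [IsScalarTower ℂ A M]
    (hM : IsSimpleModule A M) (hMdim : Module.rank ℂ M ≤ Cardinal.aleph0)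
    (f : M →ₗ[A] M) : ∃ c : ℂ, ∀ m : M, f m = c • m := by
  haveI : SMulCommClass A ℂ M :=
    ⟨fun a c m => by
      rw [← algebraMap_smul A c m, ← mul_smul, ← Algebra.commutes, mul_smul,
        algebraMap_smul]⟩
  haveI := hM
  haveI : Nontrivial M := IsSimpleModule.nontrivial A M
  letI : DecidableEq (Module.End A M) := Classical.decEq _
  obtain ⟨m₀, hm₀⟩ := exists_ne (0 : M)
  let j : Module.End A M →ₗ[ℂ] M :=
    { toFun := fun g => g m₀
      map_add' := fun _ _ => rfl
      map_smul' := fun _ _ => rfl }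
  have hjinj : Function.Injective j := by
    rw [← LinearMap.ker_eq_bot, LinearMap.ker_eq_bot']
    intro g hg
    rcases hM.1.2 (LinearMap.ker g) with h | h
    · exact absurd (h ▸ hg : m₀ ∈ (⊥ : Submodule A M)) hm₀
    · ext m; exact (LinearMap.mem_ker).mp (h ▸ Submodule.mem_top)
  have hrank : Module.rank ℂ (Module.End A M) < Cardinal.continuum :=
    lt_of_le_of_lt ((LinearMap.rank_le_of_injective j hjinj).trans hMdim)
      Cardinal.aleph0_lt_continuum
  obtain ⟨c, hc⟩ := dixmier_surjective hrank f
  exact ⟨c, fun m => by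
    rw [← hc, Module.algebraMap_end_eq_smul_id]; rfl⟩


/-- Let `A`, `B` be associative unital `ℂ`-algebras, `M` a simple `A`-module
of countable dimension over `ℂ`, and `N` a simple `B`-module of countable dimension over `ℂ`.
Then `M ⊗[ℂ] N`, with the `A ⊗[ℂ] B`-module structure determined by
`(a ⊗ b) • (m ⊗ n) = (a • m) ⊗ (b • n)`, is a simple `A ⊗[ℂ] B`-module. -/
theorem simple_tensor_of_countable_dim_simple
    (A B M N : Type*)
    [Ring A] [Algebra ℂ A] [Ring B] [Algebra ℂ B]
    [AddCommGroup M] [Module ℂ M] [Module A M] [IsScalarTower ℂ A M]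
    [AddCommGroup N] [Module ℂ N] [Module B N] [IsScalarTower ℂ B N]
    [Module (A ⊗[ℂ] B) (M ⊗[ℂ] N)]
    (hsmul : ∀ (a : A) (b : B) (m : M) (n : N),
      (a ⊗ₜ[ℂ] b) • (m ⊗ₜ[ℂ] n) = (a • m) ⊗ₜ[ℂ] (b • n))
    (hM : IsSimpleModule A M) (hMdim : Module.rank ℂ M ≤ Cardinal.aleph0)
    (hN : IsSimpleModule B N) (hNdim : Module.rank ℂ N ≤ Cardinal.aleph0) :
    IsSimpleModule (A ⊗[ℂ] B) (M ⊗[ℂ] N) := by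
  classical
  haveI := hM
  haveI := hN
  haveI ntM : Nontrivial M := IsSimpleModule.nontrivial A M
  haveI ntN : Nontrivial N := IsSimpleModule.nontrivial B N
  haveI : SMulCommClass A ℂ M :=
    ⟨fun a c m => by
      rw [← algebraMap_smul A c m, ← mul_smul, ← Algebra.commutes, mul_smul,
        algebraMap_smul]⟩
  haveI : Nontrivial (M ⊗[ℂ] N) := by
    rw [← rank_pos_iff_nontrivial (R := ℂ), rank_tensorProduct, pos_iff_ne_zero]
    exact mul_ne_zero (fun h => rank_pos.ne' (Cardinal.lift_eq_zero.mp h))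
      (fun h => rank_pos.ne' (Cardinal.lift_eq_zero.mp h))
  -- basis of N and the associated description of the tensor product
  set ι := Module.Free.ChooseBasisIndex ℂ N with hι
  set e : Module.Basis ι ℂ N := Module.Free.chooseBasis ℂ N with he
  set Φ : M ⊗[ℂ] N ≃ₗ[ℂ] (ι →₀ M) :=
    (TensorProduct.congr (LinearEquiv.refl ℂ M) e.repr).trans
      (TensorProduct.finsuppScalarRight ℂ ℂ M ι) with hΦ
  have hΦ_tmul : ∀ (m : M) (n : N) (j : ι), Φ (m ⊗ₜ[ℂ] n) j = e.repr n j • m := by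
    intro m n j
    simp [hΦ, TensorProduct.finsuppScalarRight_apply_tmul_apply]
  have hΦ_symm_single : ∀ (j : ι) (m : M),
      Φ.symm (Finsupp.single j m) = m ⊗ₜ[ℂ] e j := by
    intro j m
    simp [hΦ, TensorProduct.finsuppScalarRight_symm_apply_single]
  -- compatibility of Φ with the action of a ⊗ 1
  have hcompat : ∀ (a : A) (t : M ⊗[ℂ] N) (j : ι),
      Φ ((a ⊗ₜ[ℂ] (1 : B)) • t) j = a • Φ t j := by
    intro a t j
    induction t using TensorProduct.induction_on with
    | zero => simp
    | tmul m n =>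
        rw [hsmul, one_smul, hΦ_tmul, hΦ_tmul, smul_comm]
    | add x y hx hy =>
        rw [smul_add, map_add, Finsupp.add_apply, hx, hy, map_add,
          Finsupp.add_apply, smul_add]
  -- ℂ-scalars act through the algebra map
  have halgsmul : ∀ (c : ℂ) (x : M ⊗[ℂ] N),
      (algebraMap ℂ (A ⊗[ℂ] B) c) • x = c • x := by
    intro c x
    induction x using TensorProduct.induction_on with
    | zero => simp
    | tmul m n =>
        rw [Algebra.TensorProduct.algebraMap_apply, hsmul, algebraMap_smul,
          one_smul, TensorProduct.smul_tmul']
    | add x y hx hy => rw [smul_add, smul_add, hx, hy]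
  refine (isSimpleModule_iff ..).mpr ⟨fun P => ?_⟩
  by_cases hP : P = ⊥
  · exact Or.inl hP
  right
  have hCsmul : ∀ (c : ℂ) (x : M ⊗[ℂ] N), x ∈ P → c • x ∈ P := fun c x hx =>
    halgsmul c x ▸ P.smul_mem _ hx
  obtain ⟨t₁, ht₁P, ht₁0⟩ := P.ne_bot_iff.mp hP
  set S : Set ℕ := {k | ∃ x ∈ P, x ≠ 0 ∧ (Φ x).support.card = k} with hS
  have hSne : S.Nonempty := ⟨_, t₁, ht₁P, ht₁0, rfl⟩
  obtain ⟨t, htP, ht0, htcard⟩ := Nat.sInf_mem hSne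
  have hminS : ∀ x ∈ P, x ≠ 0 → sInf S ≤ (Φ x).support.card := fun x hx hx0 =>
    Nat.sInf_le ⟨x, hx, hx0, rfl⟩
  have hΦt : Φ t ≠ 0 := fun h => ht0 (by simpa using congrArg Φ.symm h)
  obtain ⟨j₀, hj₀⟩ := Finsupp.support_nonempty_iff.mpr hΦt
  set m₀ : M := Φ t j₀ with hm₀def
  have hm₀ : m₀ ≠ 0 := Finsupp.mem_support_iff.mp hj₀
  -- killing lemma from minimality
  have hkill : ∀ a : A, a • m₀ = 0 → (a ⊗ₜ[ℂ] (1 : B)) • t = 0 := by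
    intro a ha
    by_contra hne
    have h1 : ((a ⊗ₜ[ℂ] (1 : B)) • t) ∈ P := P.smul_mem _ htP
    have h2 : (Φ ((a ⊗ₜ[ℂ] (1 : B)) • t)).support ⊆ (Φ t).support.erase j₀ := by
      intro j hj
      rw [Finsupp.mem_support_iff, hcompat] at hj
      rcases eq_or_ne j j₀ with rfl | hjj
      · exact absurd (ha ▸ rfl) hj
      · exact Finset.mem_erase.mpr ⟨hjj, Finsupp.mem_support_iff.mpr
          fun h => hj (by rw [h, smul_zero])⟩
    have h3 : (Φ ((a ⊗ₜ[ℂ] (1 : B)) • t)).support.card < (Φ t).support.card :=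
      lt_of_le_of_lt (Finset.card_le_card h2) (Finset.card_erase_lt_of_mem hj₀)
    have h4 := hminS _ h1 hne
    omega
  -- each coordinate is a ℂ-multiple of m₀
  have hscal : ∀ j : ι, ∃ c : ℂ, Φ t j = c • m₀ := by
    intro j
    have hsurj : Function.Surjective (LinearMap.toSpanSingleton A M m₀) :=
      IsSimpleModule.toSpanSingleton_surjective A hm₀
    have hle : LinearMap.ker (LinearMap.toSpanSingleton A M m₀) ≤
        LinearMap.ker (LinearMap.toSpanSingleton A M (Φ t j)) := by
      intro a ha
      rw [LinearMap.mem_ker, LinearMap.toSpanSingleton_apply] at ha ⊢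
      have h0 := hkill a ha
      have h1 := congrArg (fun z => Φ z j) h0
      simpa [hcompat] using h1
    set eq1 := (LinearMap.toSpanSingleton A M m₀).quotKerEquivOfSurjective hsurj
      with heq1
    set φ : M →ₗ[A] M :=
      (Submodule.liftQ _ (LinearMap.toSpanSingleton A M (Φ t j)) hle) ∘ₗ
        (eq1.symm : M →ₗ[A] _) with hφdef
    have hφ : ∀ a : A, φ (a • m₀) = a • Φ t j := by
      intro a
      have h0 : eq1 (Submodule.Quotient.mk a) = a • m₀ := rfl
      have h1 : eq1.symm (a • m₀) = Submodule.Quotient.mk a := by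
        rw [← h0, LinearEquiv.symm_apply_apply]
      rw [hφdef]
      simp only [LinearMap.coe_comp, Function.comp_apply, LinearEquiv.coe_coe, h1,
        Submodule.liftQ_apply, LinearMap.toSpanSingleton_apply]
    obtain ⟨c, hc⟩ := end_eq_smul hM hMdim φ
    refine ⟨c, ?_⟩
    have h2 := hφ 1
    rw [one_smul, one_smul] at h2
    rw [← h2, hc]
  -- t is a pure tensor
  choose c hc using hscal
  set n₀ : N := (Φ t).support.sum fun j => c j • e j with hn₀def
  have ht_eq : t = m₀ ⊗ₜ[ℂ] n₀ := by
    conv_lhs => rw [← Φ.symm_apply_apply t]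
    have h1 : Φ t = (Φ t).support.sum fun j => Finsupp.single j (Φ t j) :=
      (Finsupp.sum_single (Φ t)).symm
    rw [h1, map_sum]
    rw [hn₀def, TensorProduct.tmul_sum]
    refine Finset.sum_congr rfl fun j _ => ?_
    rw [hΦ_symm_single, hc j, TensorProduct.smul_tmul]
  have hn₀ : n₀ ≠ 0 := fun h => ht0 (by rw [ht_eq, h, TensorProduct.tmul_zero])
  -- all pure tensors are in P
  have hpure : ∀ (m : M) (n : N), m ⊗ₜ[ℂ] n ∈ P := by
    intro m n
    obtain ⟨a, ha⟩ := IsSimpleModule.toSpanSingleton_surjective A hm₀ m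
    obtain ⟨b, hb⟩ := IsSimpleModule.toSpanSingleton_surjective B hn₀ n
    have h1 : ((a ⊗ₜ[ℂ] b) • (m₀ ⊗ₜ[ℂ] n₀)) ∈ P :=
      P.smul_mem _ (ht_eq ▸ htP)
    rw [hsmul] at h1
    rw [LinearMap.toSpanSingleton_apply] at ha hb
    rwa [ha, hb] at h1
  -- conclude P = ⊤
  rw [eq_top_iff]
  intro x _
  have hx : x ∈ Submodule.span ℂ {u : M ⊗[ℂ] N | ∃ m n, m ⊗ₜ[ℂ] n = u} := by
    rw [TensorProduct.span_tmul_eq_top]; trivial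
  refine Submodule.span_induction ?_ ?_ ?_ ?_ hx
  · rintro _ ⟨m, n, rfl⟩; exact hpure m n
  · exact P.zero_mem
  · exact fun u v _ _ hu hv => P.add_mem hu hv
  · exact fun r u _ hu => hCsmul r u hu
end

section
/- Let k be an algebraically closed field, let A and B be associative unital k-algebras, and let V be a simple A ⊗[k] B-module that is finite-dimensional over k. Then there exist a finite-dimensional simple A-module M and a finite-dimensional simple B-module N such that V is isomorphic, as an A ⊗[k] B-module, to M ⊗[k] N with the module structure determined by (a ⊗ b) · (m ⊗ n) = (a · m) ⊗ (b · n). -/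
open scoped TensorProduct

universe u

theorem TD.smulCommClass (k A M : Type*) [Field k] [Ring A] [Algebra k A]
    [AddCommMonoid M] [Module k M] [Module A M] [IsScalarTower k A M] :
    SMulCommClass A k M := by
  constructor
  intro a c m
  conv_lhs => rw [← algebraMap_smul A c m]
  rw [← mul_smul, ← Algebra.commutes, mul_smul, algebraMap_smul]

theorem TD.end_scalar {k A M : Type u} [Field k] [IsAlgClosed k] [Ring A] [Algebra k A]
    [AddCommGroup M] [Module k M] [Module A M] [IsScalarTower k A M] [FiniteDimensional k M]
    (hM : IsSimpleModule A M) (f : M →ₗ[A] M) : ∃ c : k, ∀ m : M, f m = c • m := by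
  haveI := hM
  haveI : Nontrivial M := IsSimpleModule.nontrivial A M
  haveI : SMulCommClass A k M := TD.smulCommClass k A M
  obtain ⟨c, hc⟩ := Module.End.exists_eigenvalue
    ((LinearMap.restrictScalars k f : M →ₗ[k] M) : Module.End k M)
  obtain ⟨v, hv⟩ := hc.exists_hasEigenvector
  refine ⟨c, ?_⟩
  set g : M →ₗ[A] M := f - c • LinearMap.id with hg
  have hker : v ∈ LinearMap.ker g := by
    have hfv : f v = c • v := hv.apply_eq_smul
    simp [hg, LinearMap.sub_apply, sub_eq_zero, hfv]
  have : LinearMap.ker g = ⊤ := by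
    rcases eq_bot_or_eq_top (LinearMap.ker g) with h | h
    · rw [h] at hker
      exact absurd (Submodule.mem_bot A |>.mp hker) hv.2
    · exact h
  intro m
  have hm : m ∈ LinearMap.ker g := this ▸ Submodule.mem_top
  have := LinearMap.mem_ker.mp hm
  simpa [hg, LinearMap.sub_apply, sub_eq_zero] using this

theorem TD.indep_sum {k A M V : Type u} [Field k] [Ring A] [Algebra k A]
    [AddCommGroup M] [Module k M] [Module A M] [IsScalarTower k A M]
    [AddCommGroup V] [Module k V] [Module A V] [IsScalarTower k A V]
    [SMulCommClass A k V]
    (hM : IsSimpleModule A M)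
    (hEnd : ∀ f : M →ₗ[A] M, ∃ c : k, ∀ m : M, f m = c • m)
    {ι : Type u} (f : ι → (M →ₗ[A] V)) (hf : LinearIndependent k f)
    (s : Finset ι) (m : ι → M) (hm : ∑ i ∈ s, f i (m i) = 0) :
    ∀ i ∈ s, m i = 0 := by
  classical
  induction s using Finset.induction_on generalizing m with
  | empty => simp
  | @insert j t hj ih =>
    rw [Finset.sum_insert hj] at hm
    set K : Submodule A M :=
      { carrier := {x | ∃ c : ι → M, (∑ i ∈ t, f i (c i)) + f j x = 0}
        zero_mem' := ⟨0, by simp⟩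
        add_mem' := by
          rintro x y ⟨c, hc⟩ ⟨d, hd⟩
          refine ⟨c + d, ?_⟩
          have h : ((∑ i ∈ t, f i (c i)) + f j x) + ((∑ i ∈ t, f i (d i)) + f j y) = 0 := by
            rw [hc, hd, add_zero]
          rw [← h]
          simp only [Pi.add_apply, map_add, Finset.sum_add_distrib]
          abel
        smul_mem' := by
          rintro a x ⟨c, hc⟩
          refine ⟨fun i => a • c i, ?_⟩
          have h : a • ((∑ i ∈ t, f i (c i)) + f j x) = 0 := by rw [hc, smul_zero]
          rw [← h]
          simp only [map_smul, smul_add, Finset.smul_sum] } with hKdef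
    have uniq : ∀ (x : M) (c d : ι → M), (∑ i ∈ t, f i (c i)) + f j x = 0 →
        (∑ i ∈ t, f i (d i)) + f j x = 0 → ∀ i ∈ t, c i = d i := by
      intro x c d hc hd i hi
      have h0 : ∑ i ∈ t, f i ((c - d) i) = 0 := by
        have h := sub_eq_zero.mpr (hc.trans hd.symm)
        simp only [add_sub_add_right_eq_sub, ← Finset.sum_sub_distrib, ← map_sub] at h
        simpa using h
      have := ih (c - d) h0 i hi
      simpa [sub_eq_zero] using this
    rcases eq_bot_or_eq_top K with hbot | htop
    · -- m j ∈ K, so m j = 0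
      have hmj : m j ∈ K := ⟨m, by rw [add_comm]; exact hm⟩
      rw [hbot, Submodule.mem_bot] at hmj
      have ht : ∑ i ∈ t, f i (m i) = 0 := by
        rw [hmj] at hm; simpa using hm
      intro i hi
      rcases Finset.mem_insert.mp hi with h | h
      · rw [h]; exact hmj
      · exact ih m ht i h
    · exfalso
      have hKx : ∀ x : M, ∃ c : ι → M, (∑ i ∈ t, f i (c i)) + f j x = 0 := by
        intro x
        have : x ∈ K := htop ▸ Submodule.mem_top
        exact this
      choose w hw using hKx
      have hlin : ∀ i ∈ t, ∃ ci : k, ∀ x : M, w x i = ci • x := by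
        intro i hi
        have hadd : ∀ x y : M, w (x + y) i = w x i + w y i := by
          intro x y
          refine uniq (x + y) (w (x + y)) (w x + w y) (hw _) ?_ i hi
          have h : ((∑ i' ∈ t, f i' (w x i')) + f j x) + ((∑ i' ∈ t, f i' (w y i')) + f j y) = 0 := by
            rw [hw, hw, add_zero]
          rw [← h]
          simp only [Pi.add_apply, map_add, Finset.sum_add_distrib]
          abel
        have hsmul : ∀ (a : A) (x : M), w (a • x) i = a • w x i := by
          intro a x
          refine uniq (a • x) (w (a • x)) (fun i' => a • w x i') (hw _) ?_ i hi
          have h : a • ((∑ i' ∈ t, f i' (w x i')) + f j x) = 0 := by rw [hw, smul_zero]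
          rw [← h]
          simp only [map_smul, smul_add, Finset.smul_sum]
        exact hEnd { toFun := fun x => w x i, map_add' := hadd, map_smul' := hsmul }
      set d : ι → k := fun i => if h : i ∈ t then (hlin i h).choose else 0 with hd
      have hdspec : ∀ i ∈ t, ∀ x : M, w x i = d i • x := by
        intro i hi x
        rw [hd]; simp only [dif_pos hi]
        exact (hlin i hi).choose_spec x
      set g : ι → k := fun i => if i = j then 1 else d i with hg
      have claim : ∑ i ∈ insert j t, g i • f i = 0 := by
        apply LinearMap.ext
        intro x
        rw [LinearMap.zero_apply]
        rw [LinearMap.coe_sum, Finset.sum_apply]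
        rw [Finset.sum_insert hj]
        have hgj : g j = 1 := by rw [hg]; simp
        have h1 : ∀ i ∈ t, (g i • f i) x = f i (w x i) := by
          intro i hi
          have hgi : g i = d i := by
            rw [hg]; simp only [if_neg (fun h : i = j => hj (h ▸ hi))]
          rw [LinearMap.smul_apply, hgi, hdspec i hi x, LinearMap.map_smul_of_tower]
        rw [Finset.sum_congr rfl h1, hgj, one_smul]
        rw [add_comm]
        exact hw x
      have := linearIndependent_iff'.mp hf (insert j t) g claim j (Finset.mem_insert_self j t)
      rw [hg] at this
      simp at this

theorem TD.eval_injective {k A M V : Type u} [Field k] [Ring A] [Algebra k A]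
    [AddCommGroup M] [Module k M] [Module A M] [IsScalarTower k A M]
    [AddCommGroup V] [Module k V] [Module A V] [IsScalarTower k A V]
    [SMulCommClass A k V]
    (hM : IsSimpleModule A M)
    (hEnd : ∀ f : M →ₗ[A] M, ∃ c : k, ∀ m : M, f m = c • m)
    (ev : (M ⊗[k] (M →ₗ[A] V)) →ₗ[k] V)
    (hev : ∀ (m : M) (g : M →ₗ[A] V), ev (m ⊗ₜ[k] g) = g m) :
    Function.Injective ev := by
  classical
  set N := M →ₗ[A] V
  set b := Module.Basis.ofVectorSpace k N with hb
  set ι := Module.Basis.ofVectorSpaceIndex k N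
  set e : (M ⊗[k] N) ≃ₗ[k] (ι →₀ M) :=
    (TensorProduct.congr (LinearEquiv.refl k M) b.repr).trans
      (TensorProduct.finsuppScalarRight k k M ι) with he
  have hsymm : ∀ l : ι →₀ M, e.symm l = l.sum fun i mi => mi ⊗ₜ[k] (b i : N) := by
    intro l
    induction l using Finsupp.induction_linear with
    | zero => simp
    | add l1 l2 h1 h2 =>
      rw [map_add, h1, h2]
      rw [Finsupp.sum_add_index]
      · intro i _; simp [TensorProduct.zero_tmul]
      · intro i _ m1 m2; rw [TensorProduct.add_tmul]
    | single i mi =>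
      rw [Finsupp.sum_single_index (by rw [TensorProduct.zero_tmul])]
      rw [LinearEquiv.trans_symm, LinearEquiv.trans_apply,
        TensorProduct.finsuppScalarRight_symm_apply_single,
        TensorProduct.congr_symm_tmul, Module.Basis.repr_symm_single_one]
      rfl
  intro x y hxy
  have hx : x = e.symm (e x) := (e.symm_apply_apply x).symm
  suffices h : ∀ z : M ⊗[k] N, ev z = 0 → z = 0 by
    have := h (x - y) (by rw [map_sub, hxy, sub_self])
    exact sub_eq_zero.mp this
  intro z hz
  set l := e z with hl
  have hz' : z = e.symm l := (e.symm_apply_apply z).symm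
  have hevz : ev z = ∑ i ∈ l.support, (b i : N) (l i) := by
    rw [hz', hsymm l, map_finsuppSum]
    exact Finset.sum_congr rfl fun i _ => hev _ _
  have hzero : ∀ i ∈ l.support, l i = 0 := by
    apply TD.indep_sum hM hEnd (fun i : ι => (b i : N)) b.linearIndependent
    rw [← hevz, hz]
  have : l = 0 := by
    ext i
    by_cases h : i ∈ l.support
    · exact hzero i h
    · exact Finsupp.notMem_support_iff.mp h
  rw [hz', this, map_zero]


/-- A `k`-vector space together with a compatible `A`-module structure,
for a `k`-algebra `A`. -/
structure ModuleOver (k A : Type u) [Field k] [Ring A] [Algebra k A] where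
  /-- The underlying type. -/
  carrier : Type u
  [ab : AddCommGroup carrier]
  [modk : Module k carrier]
  [modA : Module A carrier]
  [tower : IsScalarTower k A carrier]

attribute [instance] ModuleOver.ab ModuleOver.modk ModuleOver.modA ModuleOver.tower

/-- Auxiliary predicate: given a module structure of `A ⊗[k] B` on `M.carrier ⊗[k] N.carrier`,
it satisfies `(a ⊗ b) • (m ⊗ n) = (a • m) ⊗ (b • n)` and `V` is isomorphic, as an
`A ⊗[k] B`-module, to `M.carrier ⊗[k] N.carrier`. -/
def IsTensorDecompAux (k A B : Type u) [Field k] [Ring A] [Algebra k A] [Ring B] [Algebra k B]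
    (V : Type u) [AddCommGroup V] [Module (A ⊗[k] B) V]
    (M : ModuleOver k A) (N : ModuleOver k B)
    [inst : Module (A ⊗[k] B) (M.carrier ⊗[k] N.carrier)] : Prop :=
  (∀ (a : A) (b : B) (m : M.carrier) (n : N.carrier),
      (a ⊗ₜ[k] b) • (m ⊗ₜ[k] n) = (a • m) ⊗ₜ[k] (b • n)) ∧
  Nonempty (V ≃ₗ[A ⊗[k] B] (M.carrier ⊗[k] N.carrier))

set_option maxHeartbeats 2000000 in
set_option synthInstance.maxHeartbeats 200000 in
/-- Let `k` be an algebraically closed field, `A`, `B` associative unital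
`k`-algebras, and `V` a simple `A ⊗[k] B`-module that is finite-dimensional over `k`.  Then
there exist a finite-dimensional simple `A`-module `M` and a finite-dimensional simple
`B`-module `N` such that `V ≅ M ⊗[k] N` as `A ⊗[k] B`-modules, where the module structure
on `M ⊗[k] N` is determined by `(a ⊗ b) • (m ⊗ n) = (a • m) ⊗ (b • n)`. -/
theorem exists_tensor_decomposition_of_simple
    (k A B : Type u) [Field k] [IsAlgClosed k]
    [Ring A] [Algebra k A] [Ring B] [Algebra k B]
    (V : Type u) [AddCommGroup V] [Module k V] [Module (A ⊗[k] B) V]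
    [IsScalarTower k (A ⊗[k] B) V] [FiniteDimensional k V]
    (hV : IsSimpleModule (A ⊗[k] B) V) :
    ∃ (M : ModuleOver k A) (N : ModuleOver k B),
      FiniteDimensional k M.carrier ∧ IsSimpleModule A M.carrier ∧
      FiniteDimensional k N.carrier ∧ IsSimpleModule B N.carrier ∧
      ∃ inst : Module (A ⊗[k] B) (M.carrier ⊗[k] N.carrier),
        IsTensorDecompAux k A B V M N (inst := inst) := by
  classical
  haveI := hV
  haveI : Nontrivial V := IsSimpleModule.nontrivial (A ⊗[k] B) V
  letI instAV : Module A V :=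
    Module.compHom V (Algebra.TensorProduct.includeLeft (R := k) (S := k) (A := A) (B := B)).toRingHom
  have hAsmul : ∀ (a : A) (v : V), a • v = (a ⊗ₜ[k] (1 : B)) • v := fun a v => rfl
  letI instBV : Module B V :=
    Module.compHom V (Algebra.TensorProduct.includeRight (R := k) (A := A) (B := B)).toRingHom
  have hBsmul : ∀ (b : B) (v : V), b • v = ((1 : A) ⊗ₜ[k] b) • v := fun b v => rfl
  letI instTowerAV : IsScalarTower k A V := ⟨fun c a v => by
    rw [hAsmul, hAsmul]
    have h : (c • a) ⊗ₜ[k] (1 : B) = c • (a ⊗ₜ[k] (1 : B)) := TensorProduct.smul_tmul' c a 1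
    rw [h, smul_assoc]⟩
  letI instTowerBV : IsScalarTower k B V := ⟨fun c b v => by
    rw [hBsmul, hBsmul]
    have h : (1 : A) ⊗ₜ[k] (c • b) = c • ((1 : A) ⊗ₜ[k] b) := TensorProduct.tmul_smul c 1 b
    rw [h, smul_assoc]⟩
  haveI : IsArtinian A V := isArtinian_of_tower k (inferInstance : IsArtinian k V)
  haveI : SMulCommClass A k V := TD.smulCommClass k A V
  -- find a simple A-submodule
  obtain ⟨S, hatom, -⟩ : ∃ S : Submodule A V, IsAtom S ∧ S ≤ ⊤ := by
    rcases (IsAtomic.eq_bot_or_exists_atom_le (⊤ : Submodule A V)) with h | h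
    · exfalso
      obtain ⟨v, hv⟩ := exists_ne (0 : V)
      have hmem : v ∈ (⊥ : Submodule A V) := h ▸ Submodule.mem_top
      exact hv ((Submodule.mem_bot A).mp hmem)
    · exact h
  have hMsimple : IsSimpleModule A ↥S := isSimpleModule_iff_isAtom.mpr hatom
  haveI := hMsimple
  haveI instTowerkAS : IsScalarTower k A ↥S := inferInstance
  letI instkS : Module k ↥S := S.module'
  haveI hFD : FiniteDimensional k (↥S) := by
    refine FiniteDimensional.of_injective (V₂ := V)
      ⟨⟨Subtype.val, fun _ _ => rfl⟩, fun _ _ => rfl⟩ ?_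
    exact fun x y h => Subtype.coe_injective h
  have hEnd := TD.end_scalar (k := k) hMsimple
  -- the space N of A-linear maps S -> V
  have hres : ∀ (f : ↥S →ₗ[A] V) (c : k) (x : ↥S), f (c • x) = c • f x := by
    intro f c x
    rw [← algebraMap_smul A c x, f.map_smul, algebraMap_smul]
  letI resmap : (↥S →ₗ[A] V) →ₗ[k] (↥S →ₗ[k] V) :=
    { toFun := fun f => { toFun := f, map_add' := f.map_add, map_smul' := fun c x => hres f c x }
      map_add' := fun f g => LinearMap.ext fun x => rfl
      map_smul' := fun c f => LinearMap.ext fun x => rfl }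
  haveI hFDN : FiniteDimensional k (↥S →ₗ[A] V) :=
    FiniteDimensional.of_injective resmap
      (fun f g h => LinearMap.ext fun x => LinearMap.congr_fun h x)
  -- evaluation map
  letI evalBi : ↥S →ₗ[k] (↥S →ₗ[A] V) →ₗ[k] V := LinearMap.mk₂ k (fun m g => g m)
    (fun m m' g => g.map_add m m')
    (fun c m g => hres g c m)
    (fun m g g' => rfl)
    (fun c m g => rfl)
  letI eval : (↥S ⊗[k] (↥S →ₗ[A] V)) →ₗ[k] V := TensorProduct.lift evalBi
  have heval : ∀ (m : ↥S) (g : ↥S →ₗ[A] V), eval (m ⊗ₜ[k] g) = g m := fun m g => rfl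
  have hinj : Function.Injective eval := TD.eval_injective hMsimple hEnd eval heval
  -- surjectivity
  have hstep : ∀ (a : A) (b : B) (x : ↥S ⊗[k] (↥S →ₗ[A] V)),
      ∃ y : ↥S ⊗[k] (↥S →ₗ[A] V), eval y = (a ⊗ₜ[k] b) • eval x := by
    intro a b x
    induction x using TensorProduct.induction_on with
    | zero => exact ⟨0, by simp⟩
    | tmul m g =>
      refine ⟨(a • m) ⊗ₜ[k]
        (⟨⟨fun x => ((1:A) ⊗ₜ[k] b) • g x, fun x y => by simp only [map_add, smul_add]⟩,
          fun a' x => ?_⟩ : ↥S →ₗ[A] V), ?_⟩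
      · show ((1:A) ⊗ₜ[k] b) • g (a' • x) = a' • (((1:A) ⊗ₜ[k] b) • g x)
        rw [g.map_smul, hAsmul, hAsmul (a := a'), ← mul_smul, ← mul_smul,
          Algebra.TensorProduct.tmul_mul_tmul, Algebra.TensorProduct.tmul_mul_tmul,
          one_mul, mul_one, one_mul, mul_one]
      · rw [heval, heval]
        show ((1:A) ⊗ₜ[k] b) • g (a • m) = (a ⊗ₜ[k] b) • g m
        rw [g.map_smul, hAsmul, ← mul_smul, Algebra.TensorProduct.tmul_mul_tmul,
          one_mul, mul_one]
    | add x y hx hy =>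
      obtain ⟨u, hu⟩ := hx
      obtain ⟨w, hw⟩ := hy
      exact ⟨u + w, by rw [map_add, hu, hw, map_add, smul_add]⟩
  letI W : Submodule (A ⊗[k] B) V :=
    { carrier := Set.range eval
      zero_mem' := ⟨0, map_zero _⟩
      add_mem' := by rintro x y ⟨u, rfl⟩ ⟨w, rfl⟩; exact ⟨u + w, map_add _ _ _⟩
      smul_mem' := by
        intro t
        induction t using TensorProduct.induction_on with
        | zero => rintro v ⟨x, rfl⟩; exact ⟨0, by rw [map_zero, zero_smul]⟩
        | tmul a b => rintro v ⟨x, rfl⟩; exact hstep a b x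
        | add t t' ht ht' =>
          rintro v hv
          obtain ⟨u, hu⟩ := ht hv
          obtain ⟨w, hw⟩ := ht' hv
          exact ⟨u + w, by rw [map_add, hu, hw, add_smul]⟩ }
  obtain ⟨m₀, hm₀S, hm₀⟩ := (Submodule.ne_bot_iff S).mp hatom.1
  have hWtop : W = ⊤ := by
    rcases eq_bot_or_eq_top W with h | h
    · exfalso
      have hmem : m₀ ∈ W := ⟨(⟨m₀, hm₀S⟩ : ↥S) ⊗ₜ[k] S.subtype, rfl⟩
      rw [h, Submodule.mem_bot] at hmem
      exact hm₀ hmem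
    · exact h
  have hsurj : Function.Surjective eval := by
    intro v
    have hv : v ∈ W := hWtop ▸ Submodule.mem_top
    exact hv
  letI eV : (↥S ⊗[k] (↥S →ₗ[A] V)) ≃ₗ[k] V := LinearEquiv.ofBijective eval ⟨hinj, hsurj⟩
  have heV : ∀ x, eV x = eval x := fun x => rfl
  -- B-module structure on N
  letI instSMulBN : SMul B (↥S →ₗ[A] V) := ⟨fun b g =>
    ⟨⟨fun x => ((1:A) ⊗ₜ[k] b) • g x, fun x y => by simp only [map_add, smul_add]⟩,
      fun a' x => by
        show ((1:A) ⊗ₜ[k] b) • g (a' • x) = a' • (((1:A) ⊗ₜ[k] b) • g x)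
        rw [g.map_smul, hAsmul, hAsmul (a := a'), ← mul_smul, ← mul_smul,
          Algebra.TensorProduct.tmul_mul_tmul, Algebra.TensorProduct.tmul_mul_tmul,
          one_mul, mul_one, one_mul, mul_one]⟩⟩
  have hBNsmul : ∀ (b : B) (g : ↥S →ₗ[A] V) (m : ↥S),
      (b • g) m = ((1:A) ⊗ₜ[k] b) • g m := fun _ _ _ => rfl
  letI instBN : Module B (↥S →ₗ[A] V) :=
    { one_smul := fun g => LinearMap.ext fun m => by
        rw [hBNsmul, ← Algebra.TensorProduct.one_def, one_smul]
      mul_smul := fun b b' g => LinearMap.ext fun m => by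
        rw [hBNsmul, hBNsmul, hBNsmul, ← mul_smul, Algebra.TensorProduct.tmul_mul_tmul, one_mul]
      smul_zero := fun b => LinearMap.ext fun m => by
        rw [hBNsmul, LinearMap.zero_apply, smul_zero]
      smul_add := fun b g g' => LinearMap.ext fun m => by
        rw [hBNsmul, LinearMap.add_apply, LinearMap.add_apply, hBNsmul, hBNsmul, smul_add]
      add_smul := fun b b' g => LinearMap.ext fun m => by
        rw [hBNsmul, LinearMap.add_apply, hBNsmul, hBNsmul, ← add_smul, ← TensorProduct.tmul_add]
      zero_smul := fun g => LinearMap.ext fun m => by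
        rw [hBNsmul, LinearMap.zero_apply, TensorProduct.tmul_zero, zero_smul] }
  letI instTowerkBN : IsScalarTower k B (↥S →ₗ[A] V) := ⟨fun c b g => LinearMap.ext fun m => by
    rw [hBNsmul, LinearMap.smul_apply, hBNsmul]
    have h : (1:A) ⊗ₜ[k] (c • b) = c • ((1:A) ⊗ₜ[k] b) := TensorProduct.tmul_smul c 1 b
    rw [h, smul_assoc]⟩
  have hsubne : (S.subtype : ↥S →ₗ[A] V) ≠ 0 := by
    intro h
    have h0 : m₀ = 0 := by
      have := LinearMap.congr_fun h (⟨m₀, hm₀S⟩ : ↥S)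
      simpa using this
    exact hm₀ h0
  haveI : Nontrivial (Submodule B (↥S →ₗ[A] V)) := by
    refine ⟨⊥, ⊤, fun h => hsubne ?_⟩
    have hmem : (S.subtype : ↥S →ₗ[A] V) ∈ (⊤ : Submodule B (↥S →ₗ[A] V)) := Submodule.mem_top
    rw [← h, Submodule.mem_bot] at hmem
    exact hmem
  haveI : Nontrivial ↥S := IsSimpleModule.nontrivial A ↥S
  have hNsimple : IsSimpleModule B (↥S →ₗ[A] V) := by
    refine IsSimpleModule.mk (toIsSimpleOrder := { toNontrivial := inferInstance, eq_bot_or_eq_top := ?_ })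
    intro P
    rcases eq_or_ne P ⊥ with hP | hP
    · exact Or.inl hP
    right
    obtain ⟨f₀, hf₀P, hf₀⟩ := (Submodule.ne_bot_iff P).mp hP
    let Pk : Submodule k (↥S →ₗ[A] V) :=
      { carrier := P
        zero_mem' := P.zero_mem
        add_mem' := fun hx hy => P.add_mem hx hy
        smul_mem' := fun c g hg => by
          rw [← algebraMap_smul B c g]; exact P.smul_mem _ hg }
    let lT : (↥S ⊗[k] ↥Pk) →ₗ[k] (↥S ⊗[k] (↥S →ₗ[A] V)) := LinearMap.lTensor ↥S Pk.subtype
    let ev2 : (↥S ⊗[k] ↥Pk) →ₗ[k] V := eval ∘ₗ lT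
    have hinj2 : Function.Injective ev2 := by
      apply hinj.comp
      exact Module.Flat.lTensor_preserves_injective_linearMap Pk.subtype Subtype.coe_injective
    have hev2 : ∀ (m : ↥S) (g : ↥Pk), ev2 (m ⊗ₜ[k] g) = (g : ↥S →ₗ[A] V) m := fun m g => rfl
    have hstep2 : ∀ (a : A) (b : B) (x : ↥S ⊗[k] ↥Pk),
        ∃ y : ↥S ⊗[k] ↥Pk, ev2 y = (a ⊗ₜ[k] b) • ev2 x := by
      intro a b x
      induction x using TensorProduct.induction_on with
      | zero => exact ⟨0, by simp⟩
      | tmul m g =>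
        refine ⟨(a • m) ⊗ₜ[k] (⟨b • (g : ↥S →ₗ[A] V), P.smul_mem b g.2⟩ : ↥Pk), ?_⟩
        rw [hev2, hev2]
        show (b • (g : ↥S →ₗ[A] V)) (a • m) = (a ⊗ₜ[k] b) • (g : ↥S →ₗ[A] V) m
        rw [hBNsmul, (g : ↥S →ₗ[A] V).map_smul, hAsmul, ← mul_smul,
          Algebra.TensorProduct.tmul_mul_tmul, one_mul, mul_one]
      | add x y hx hy =>
        obtain ⟨u, hu⟩ := hx
        obtain ⟨w, hw⟩ := hy
        exact ⟨u + w, by rw [map_add, hu, hw, map_add, smul_add]⟩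
    let W2 : Submodule (A ⊗[k] B) V :=
      { carrier := Set.range ev2
        zero_mem' := ⟨0, map_zero _⟩
        add_mem' := by rintro x y ⟨u, rfl⟩ ⟨w, rfl⟩; exact ⟨u + w, map_add _ _ _⟩
        smul_mem' := by
          intro t
          induction t using TensorProduct.induction_on with
          | zero => rintro v ⟨x, rfl⟩; exact ⟨0, by rw [map_zero, zero_smul]⟩
          | tmul a b => rintro v ⟨x, rfl⟩; exact hstep2 a b x
          | add t t' ht ht' =>
            rintro v hv
            obtain ⟨u, hu⟩ := ht hv
            obtain ⟨w, hw⟩ := ht' hv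
            exact ⟨u + w, by rw [map_add, hu, hw, add_smul]⟩ }
    obtain ⟨x₀, hx₀⟩ : ∃ x : ↥S, (f₀ : ↥S →ₗ[A] V) x ≠ 0 := by
      by_contra h
      push_neg at h
      exact hf₀ (LinearMap.ext fun x => h x)
    have hW2top : W2 = ⊤ := by
      rcases eq_bot_or_eq_top W2 with h | h
      · exfalso
        have hmem : (f₀ x₀) ∈ W2 := ⟨x₀ ⊗ₜ[k] (⟨f₀, hf₀P⟩ : ↥Pk), rfl⟩
        rw [h, Submodule.mem_bot] at hmem
        exact hx₀ hmem
      · exact h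
    have hsurj2 : Function.Surjective ev2 := fun v => (hW2top ▸ Submodule.mem_top : v ∈ W2)
    let e2 : (↥S ⊗[k] ↥Pk) ≃ₗ[k] V := LinearEquiv.ofBijective ev2 ⟨hinj2, hsurj2⟩
    have hrank : Module.finrank k ↥Pk = Module.finrank k (↥S →ₗ[A] V) := by
      have h1 : Module.finrank k (↥S ⊗[k] ↥Pk) = Module.finrank k V := e2.finrank_eq
      have h2 : Module.finrank k (↥S ⊗[k] (↥S →ₗ[A] V)) = Module.finrank k V := eV.finrank_eq
      rw [Module.finrank_tensorProduct] at h1 h2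
      have hpos : 0 < Module.finrank k ↥S := Module.finrank_pos
      exact Nat.eq_of_mul_eq_mul_left hpos (h1.trans h2.symm)
    have hPk : Pk = ⊤ := Submodule.eq_top_of_finrank_eq hrank
    rw [Submodule.eq_top_iff']
    intro g
    have hgmem : g ∈ Pk := hPk ▸ Submodule.mem_top
    exact hgmem
  -- transport the A ⊗ B module structure along eV
  letI instSMulT : SMul (A ⊗[k] B) (↥S ⊗[k] (↥S →ₗ[A] V)) := ⟨fun t x => eV.symm (t • eV x)⟩
  have hTsmul : ∀ (t : A ⊗[k] B) (x : ↥S ⊗[k] (↥S →ₗ[A] V)), t • x = eV.symm (t • eV x) :=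
    fun _ _ => rfl
  letI instT : Module (A ⊗[k] B) (↥S ⊗[k] (↥S →ₗ[A] V)) :=
    Function.Injective.module (A ⊗[k] B) (f := (eV : (↥S ⊗[k] (↥S →ₗ[A] V)) →ₗ[k] V).toAddMonoidHom)
      eV.injective (fun t x => eV.apply_symm_apply _)
  letI Phi : V ≃ₗ[A ⊗[k] B] (↥S ⊗[k] (↥S →ₗ[A] V)) :=
    { toFun := fun v => eV.symm v
      map_add' := fun v w => map_add eV.symm v w
      map_smul' := fun t v => by
        rw [RingHom.id_apply, hTsmul, eV.apply_symm_apply]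
      invFun := fun x => eV x
      left_inv := fun v => eV.apply_symm_apply v
      right_inv := fun x => eV.symm_apply_apply x }
  have htensor : ∀ (a : A) (b : B) (m : ↥S) (n : ↥S →ₗ[A] V),
      (a ⊗ₜ[k] b) • (m ⊗ₜ[k] n) = (a • m) ⊗ₜ[k] (b • n) := by
    intro a b m n
    rw [hTsmul]
    have h1 : eV ((a • m) ⊗ₜ[k] (b • n)) = (a ⊗ₜ[k] b) • eV (m ⊗ₜ[k] n) := by
      rw [heV, heV, heval, heval]
      rw [hBNsmul, n.map_smul, hAsmul, ← mul_smul, Algebra.TensorProduct.tmul_mul_tmul,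
        one_mul, mul_one]
    rw [← h1, eV.symm_apply_apply]
  exact ⟨⟨↥S⟩, ⟨↥S →ₗ[A] V⟩, hFD, hMsimple, hFDN, hNsimple, instT, htensor, ⟨Phi⟩⟩
end

section
/- Let k be a field, let A and B be associative unital k-algebras, and let V be a simple A ⊗[k] B-module. Regard V as an A-module via a · v = (a ⊗ 1) · v and as a B-module via b · v = (1 ⊗ b) · v. Let M ⊆ V be a simple A-submodule, and equip Hom_A(M, V) with the B-module structure (b · L)(m) = b · L(m). Let N ⊆ Hom_A(M, V) be a nonzero B-submodule such that M ⊗[k] N, with the A ⊗[k] B-module structure determined by (a ⊗ b) · (m ⊗ L) = (a · m) ⊗ (b · L), is a simple A ⊗[k] B-module. Then the evaluation map M ⊗[k] N → V sending m ⊗ L to L(m) is an isomorphism of A ⊗[k] B-modules. -/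
open scoped TensorProduct

/-- Let `k` be a field, `A`, `B` associative unital `k`-algebras and `V` a
simple `A ⊗[k] B`-module, regarded as an `A`-module via `a • v = (a ⊗ 1) • v` and as a
`B`-module via `b • v = (1 ⊗ b) • v`.  Let `M ⊆ V` be a simple `A`-submodule, equip
`Hom_A(M, V)` with the `B`-module structure `(b • L) m = b • L m`, and let
`N ⊆ Hom_A(M, V)` be a nonzero `B`-submodule such that `M ⊗[k] N`, with the `A ⊗[k] B`-module
structure determined by `(a ⊗ b) • (m ⊗ L) = (a • m) ⊗ (b • L)`, is a simple
`A ⊗[k] B`-module.  Then the evaluation map `M ⊗[k] N → V`, `m ⊗ L ↦ L m`, is an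
isomorphism of `A ⊗[k] B`-modules. -/
theorem evaluation_map_is_isomorphism
    (k A B V : Type*) [Field k]
    [Ring A] [Algebra k A] [Ring B] [Algebra k B]
    [AddCommGroup V] [Module k V]
    [Module (A ⊗[k] B) V] (hV : IsSimpleModule (A ⊗[k] B) V)
    -- the induced `A`- and `B`-module structures on `V`
    [Module A V] (hAV : ∀ (a : A) (v : V), a • v = (a ⊗ₜ[k] (1 : B)) • v)
    [Module B V] (hBV : ∀ (b : B) (v : V), b • v = ((1 : A) ⊗ₜ[k] b) • v)
    [IsScalarTower k A V] [SMulCommClass A k V]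
    -- a simple `A`-submodule `M ⊆ V`
    (M : Submodule A V) (hM : IsSimpleModule A M)
    -- the `B`-module structure on `Hom_A(M, V)` given by `(b • L) m = b • (L m)`
    [Module B (M →ₗ[A] V)]
    (hBL : ∀ (b : B) (L : M →ₗ[A] V) (m : M), (b • L) m = b • (L m))
    [IsScalarTower k B (M →ₗ[A] V)]
    -- a nonzero `B`-submodule `N ⊆ Hom_A(M, V)`
    (N : Submodule B (M →ₗ[A] V)) (hN : N ≠ ⊥)
    -- the `A ⊗[k] B`-module structure on `M ⊗[k] N`
    [Module (A ⊗[k] B) (M ⊗[k] N)]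
    (hsmul : ∀ (a : A) (b : B) (m : M) (L : N),
      (a ⊗ₜ[k] b) • (m ⊗ₜ[k] L) = (a • m) ⊗ₜ[k] (b • L))
    (hsimple : IsSimpleModule (A ⊗[k] B) (M ⊗[k] N)) :
    ∃ e : (M ⊗[k] N) ≃ₗ[A ⊗[k] B] V, ∀ (m : M) (L : N),
      e (m ⊗ₜ[k] L) = (L : M →ₗ[A] V) m := by
  classical
  -- evaluation as a k-bilinear map
  have hL_smul : ∀ (c : k) (L : N), ((c • L : N) : M →ₗ[A] V) = c • (L : M →ₗ[A] V) := by
    intro c L; rfl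
  let evb : M →ₗ[k] (N →ₗ[k] V) :=
    { toFun := fun m =>
        { toFun := fun L => (L : M →ₗ[A] V) m
          map_add' := fun L₁ L₂ => by simp
          map_smul' := fun c L => rfl }
      map_add' := fun m₁ m₂ => by ext L; simp
      map_smul' := fun c m => by ext L; simp }
  let ev : (M ⊗[k] N) →ₗ[k] V := TensorProduct.lift evb
  have ev_tmul : ∀ (m : M) (L : N), ev (m ⊗ₜ[k] L) = (L : M →ₗ[A] V) m := fun m L => rfl
  have key : ∀ (r : A ⊗[k] B) (x : M ⊗[k] N), ev (r • x) = r • ev x := by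
    intro r x
    induction r using TensorProduct.induction_on with
    | zero => simp
    | tmul a b =>
        induction x using TensorProduct.induction_on with
        | zero => simp
        | tmul m L =>
            rw [hsmul, ev_tmul, ev_tmul]
            have : ((b • L : N) : M →ₗ[A] V) = b • (L : M →ₗ[A] V) := rfl
            rw [this, hBL, LinearMap.map_smul, hBV, hAV, ← mul_smul,
              Algebra.TensorProduct.tmul_mul_tmul, one_mul, mul_one]
        | add x y hx hy => rw [smul_add, map_add, hx, hy, map_add, smul_add]
    | add r s hr hs => rw [add_smul, map_add, hr, hs]; exact (add_smul r s (ev x)).symm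
  let f : (M ⊗[k] N) →ₗ[A ⊗[k] B] V :=
    { toFun := ev
      map_add' := ev.map_add
      map_smul' := key }
  -- f is nonzero
  obtain ⟨L, hLN, hL0⟩ := Submodule.exists_mem_ne_zero_of_ne_bot hN
  obtain ⟨m, hm⟩ : ∃ m : M, L m ≠ 0 := by
    by_contra h
    push_neg at h
    exact hL0 (LinearMap.ext h)
  have hf_ne : f (m ⊗ₜ[k] (⟨L, hLN⟩ : N)) ≠ 0 := hm
  -- injective
  have hker : LinearMap.ker f = ⊥ := by
    rcases hsimple.1.2 (LinearMap.ker f) with h | h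
    · exact h
    · exfalso
      apply hf_ne
      have : (m ⊗ₜ[k] (⟨L, hLN⟩ : N)) ∈ LinearMap.ker f := h ▸ Submodule.mem_top
      exact this
  have hrange : LinearMap.range f = ⊤ := by
    rcases hV.1.2 (LinearMap.range f) with h | h
    · exfalso
      apply hf_ne
      have : f (m ⊗ₜ[k] (⟨L, hLN⟩ : N)) ∈ LinearMap.range f := LinearMap.mem_range_self f _
      rw [h] at this
      simpa using this
    · exact h
  let e := LinearEquiv.ofBijective f
    ⟨LinearMap.ker_eq_bot.mp hker, LinearMap.range_eq_top.mp hrange⟩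
  exact ⟨e, fun m L => rfl⟩
end

section
/- Let k be an algebraically closed field, let A and B be associative unital k-algebras, and let V be a simple A ⊗[k] B-module that is finite-dimensional over k. Regard V as an A-module via a · v = (a ⊗ 1) · v, giving an algebra homomorphism from A to End_k(V). Then the image of A under this homomorphism is a semisimple ring. -/
set_option maxHeartbeats 1000000
set_option synthInstance.maxHeartbeats 400000


open scoped TensorProduct

/-- If `V` is a finite-dimensional vector space over a field `k` and `R` is a subalgebra of
`End_k V` such that `V` is semisimple as an `R`-module, then `R` is a semisimple ring. -/
lemma aux_isSemisimpleRing_of_isSemisimpleModule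
    (k : Type*) [Field k] (V : Type*) [AddCommGroup V] [Module k V] [FiniteDimensional k V]
    (R : Subalgebra k (Module.End k V)) (hss : IsSemisimpleModule R V) :
    IsSemisimpleRing R := by
  classical
  set n := Module.finrank k V
  let b := Module.finBasis k V
  -- the pi module is semisimple
  haveI hpi : IsSemisimpleModule R (Fin n → V) := by
    refine isSemisimpleModule_of_isSemisimpleModule_submodule'
      (p := fun i => LinearMap.range (LinearMap.single R (fun _ : Fin n => V) i))
      (fun i => IsSemisimpleModule.range _) ?_
    simp_rw [LinearMap.range_eq_map, Submodule.iSup_map_single, Submodule.pi_top]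
  -- embed `R` into `V^n`
  let f : R →ₗ[R] (Fin n → V) := LinearMap.pi fun i => LinearMap.toSpanSingleton R V (b i)
  have hf : Function.Injective f := by
    rw [injective_iff_map_eq_zero]
    intro r hr
    have hr' : ∀ i, (r : Module.End k V) (b i) = 0 := fun i => congrFun hr i
    have : (r : Module.End k V) = 0 := b.ext fun i => hr' i
    exact Subtype.ext this
  haveI : IsSemisimpleModule R (LinearMap.range f) := inferInstance
  exact IsSemisimpleModule.congr (N := R) (M := LinearMap.range f) (LinearEquiv.ofInjective f hf)

/-- Let `k` be an algebraically closed field, `A`, `B` associative unital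
`k`-algebras, and `V` a simple `A ⊗[k] B`-module that is finite-dimensional over `k`.
Regard `V` as an `A`-module via `a • v = (a ⊗ 1) • v`; this gives the algebra homomorphism
`A → End_k V`, `a ↦ (v ↦ (a ⊗ 1) • v)`.  Then the image of `A` under this homomorphism is a
semisimple ring. -/
theorem image_in_end_isSemisimpleRing
    (k A B : Type*) [Field k] [IsAlgClosed k]
    [Ring A] [Algebra k A] [Ring B] [Algebra k B]
    (V : Type*) [AddCommGroup V] [Module k V] [Module (A ⊗[k] B) V]
    [IsScalarTower k (A ⊗[k] B) V] [FiniteDimensional k V]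
    (hV : IsSimpleModule (A ⊗[k] B) V) :
    IsSemisimpleRing
      ((Algebra.lsmul k k V : (A ⊗[k] B) →ₐ[k] Module.End k V).comp
        (Algebra.TensorProduct.includeLeft : A →ₐ[k] A ⊗[k] B)).range := by
  classical
  set φ := ((Algebra.lsmul k k V : (A ⊗[k] B) →ₐ[k] Module.End k V).comp
        (Algebra.TensorProduct.includeLeft : A →ₐ[k] A ⊗[k] B)) with hφ
  set R := φ.range with hR
  -- the action of `R` on `V` is via `a ⊗ 1`
  have hsmul : ∀ (a : A) (v : V), (φ a) v = (a ⊗ₜ[k] (1 : B)) • v := fun a v => rfl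
  -- every element of `R` comes from some `a : A`
  -- `V` is Artinian over `R`
  haveI : IsArtinian R V := isArtinian_of_tower k inferInstance
  haveI : IsAtomic (Submodule R V) :=
    isAtomic_of_orderBot_wellFounded_lt (IsWellFounded.wf)
  haveI : Nontrivial V := IsSimpleModule.nontrivial (A ⊗[k] B) V
  -- the socle
  set S : Submodule R V := sSup { m : Submodule R V | IsSimpleModule R m } with hS
  -- for each `b : B`, the action of `1 ⊗ b` is `R`-linear
  have hcomm : ∀ (β : B) (r : R) (v : V),
      ((1 : A) ⊗ₜ[k] β) • ((r : Module.End k V) v) = (r : Module.End k V) (((1:A) ⊗ₜ[k] β) • v) := by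
    intro β r v
    obtain ⟨a, ha⟩ := r.2
    rw [← ha]
    show ((1:A) ⊗ₜ[k] β) • ((a ⊗ₜ[k] (1:B)) • v) = (a ⊗ₜ[k] (1:B)) • (((1:A) ⊗ₜ[k] β) • v)
    rw [← mul_smul, ← mul_smul, Algebra.TensorProduct.tmul_mul_tmul,
      Algebra.TensorProduct.tmul_mul_tmul, one_mul, mul_one, one_mul, mul_one]
  let L : B → V →ₗ[R] V := fun β =>
    { toFun := fun v => ((1 : A) ⊗ₜ[k] β) • v
      map_add' := fun x y => smul_add _ x y
      map_smul' := fun r v => hcomm β r v }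
  -- images of simple submodules under `L β` lie in `S`
  have hmap : ∀ (β : B) (m : Submodule R V), IsSimpleModule R m →
      Submodule.map (L β) m ≤ S := by
    intro β m hm
    haveI : IsSimpleOrder (Submodule R m) := hm.toIsSimpleOrder
    rcases eq_bot_or_eq_top (LinearMap.ker ((L β).comp m.subtype)) with h | h
    · -- injective on `m`, image is simple
      have hinj : Function.Injective ((L β).comp m.subtype) :=
        (injective_iff_map_eq_zero _).mpr (LinearMap.ker_eq_bot'.mp h)
      have e : m ≃ₗ[R] Submodule.map (L β) m := by
        refine (LinearEquiv.ofInjective _ hinj).trans (LinearEquiv.ofEq _ _ ?_)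
        rw [LinearMap.range_comp, Submodule.range_subtype]
      haveI := hm
      have : IsSimpleModule R (Submodule.map (L β) m) :=
        IsSimpleModule.congr (M := Submodule.map (L β) m) (N := m) e.symm
      exact le_sSup this
    · -- kernel is everything, image is `⊥`
      have : (L β).comp m.subtype = 0 := by
        rw [← LinearMap.ker_eq_top] at *; exact h
      have hbot : Submodule.map (L β) m = ⊥ := by
        rw [eq_bot_iff]
        rintro x ⟨y, hy, rfl⟩
        have := congrFun (congrArg DFunLike.coe this) ⟨y, hy⟩
        simpa using this
      rw [hbot]; exact bot_le
  -- `S` is stable under the action of `1 ⊗ β`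
  have hBstable : ∀ (β : B) (v : V), v ∈ S → ((1 : A) ⊗ₜ[k] β) • v ∈ S := by
    intro β v hv
    have : Submodule.map (L β) S ≤ S := by
      conv_lhs => rw [hS, sSup_eq_iSup']
      rw [Submodule.map_iSup]
      exact iSup_le fun m => hmap β m.1 m.2
    exact this ⟨v, hv, rfl⟩
  -- `S` underlies an `A ⊗ B`-submodule
  let S' : Submodule (A ⊗[k] B) V :=
    { carrier := (S : Set V)
      add_mem' := fun hx hy => S.add_mem hx hy
      zero_mem' := S.zero_mem
      smul_mem' := by
        intro x v hv
        induction x using TensorProduct.induction_on with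
        | zero => simp
        | tmul a β =>
            have h1 : ((1 : A) ⊗ₜ[k] β) • v ∈ S := hBstable β v hv
            have h2 : (a ⊗ₜ[k] β) • v = (a ⊗ₜ[k] (1 : B)) • (((1 : A) ⊗ₜ[k] β) • v) := by
              rw [← mul_smul, Algebra.TensorProduct.tmul_mul_tmul, mul_one, one_mul]
            rw [h2]
            exact S.smul_mem (⟨φ a, a, rfl⟩ : R) h1
        | add x y hx hy =>
            rw [add_smul]
            exact S.add_mem hx hy }
  -- `S'` is nonzero, hence all of `V`
  obtain ⟨m, hm⟩ := IsAtomic.exists_atom (α := Submodule R V)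
  have hSne : S' ≠ ⊥ := by
    intro hbot
    have hmS : m ≤ S := le_sSup (isSimpleModule_iff_isAtom.mpr hm)
    have : m = ⊥ := by
      rw [eq_bot_iff]
      intro x hx
      have : x ∈ S' := hmS hx
      rw [hbot] at this
      simpa using this
    exact hm.1 this
  have hS'top : S' = ⊤ := (eq_bot_or_eq_top S').resolve_left hSne
  have hStop : S = ⊤ := by
    rw [eq_top_iff]
    intro v _
    have : v ∈ S' := hS'top ▸ Submodule.mem_top
    exact this
  rw [hS] at hStop
  haveI hss : IsSemisimpleModule R V := IsSemisimpleModule.of_sSup_simples_eq_top hStop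
  exact aux_isSemisimpleRing_of_isSemisimpleModule k V R hss
end
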